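/- CS₊ⁿ ⊆ CS_{∞+}ⁿ ⊆ cl(CS₊ⁿ), and hence cl(CS_{∞+}ⁿ) = cl(CS₊ⁿ), where CS_{∞+}ⁿ is the set of n×n symmetric matrices admitting a Gram representation by infinite positive semidefinite matrices in S^ℕ. -/

import Mathlib

open Matrix

def CompletelyPSD {n : ℕ} (A : Matrix (Fin n) (Fin n) ℝ) : Prop :=
  ∃ (d : ℕ) (X : Fin n → Matrix (Fin d) (Fin d) ℝ),
    1 ≤ d ∧ (∀ i, (X i).PosSemidef) ∧ ∀ i j, A i j = ((X i) * (X j)).trace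

/-- An infinite symmetric matrix with finite Hilbert–Schmidt norm all of whose finite
principal submatrices are psd. -/
def InfinitePSD (X : ℕ → ℕ → ℝ) : Prop :=
  (∀ i j, X i j = X j i) ∧ Summable (fun p : ℕ × ℕ => (X p.1 p.2) ^ 2) ∧
  ∀ m : ℕ, (Matrix.of fun i j : Fin m => X i j).PosSemidef

/-- `A ∈ CS_{∞+}ⁿ`: `A` has a Gram representation by infinite psd matrices in `S^ℕ`. -/
def CSinfPlus {n : ℕ} (A : Matrix (Fin n) (Fin n) ℝ) : Prop :=
  ∃ X : Fin n → (ℕ → ℕ → ℝ), (∀ i, InfinitePSD (X i)) ∧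
    ∀ i j, A i j = ∑' p : ℕ × ℕ, X i p.1 p.2 * X j p.1 p.2

namespace CSProofAux

lemma sum2_ext {f : ℕ → ℕ → ℝ} {m N : ℕ} (hmN : m ≤ N)
    (hf : ∀ a b, m ≤ a ∨ m ≤ b → f a b = 0) :
    ∑ a ∈ Finset.range m, ∑ b ∈ Finset.range m, f a b
      = ∑ a ∈ Finset.range N, ∑ b ∈ Finset.range N, f a b := by
  have sub := Finset.range_subset_range.2 hmN
  calc ∑ a ∈ Finset.range m, ∑ b ∈ Finset.range m, f a b
      = ∑ a ∈ Finset.range m, ∑ b ∈ Finset.range N, f a b :=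
        Finset.sum_congr rfl fun a _ => Finset.sum_subset sub
          (fun b _ hb => hf a b (Or.inr (by simpa using hb)))
    _ = ∑ a ∈ Finset.range N, ∑ b ∈ Finset.range N, f a b :=
        Finset.sum_subset sub (fun a _ ha =>
          Finset.sum_eq_zero fun b _ => hf a b (Or.inl (by simpa using ha)))

lemma quad_eq (m : ℕ) (f : ℕ → ℕ → ℝ) (x : Fin m → ℝ) :
    dotProduct (star x) ((Matrix.of fun a b : Fin m => f a b) *ᵥ x)
      = ∑ a ∈ Finset.range m, ∑ b ∈ Finset.range m,
          f a b * (if h : a < m then x ⟨a, h⟩ else 0) * (if h : b < m then x ⟨b, h⟩ else 0) := by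
  set xe : ℕ → ℝ := fun k => if h : k < m then x ⟨k, h⟩ else 0 with hxe
  have hx : ∀ a : Fin m, x a = xe ↑a := fun a => by simp [hxe, a.isLt]
  simp only [star_trivial, dotProduct, mulVec, of_apply]
  have h1 : ∀ a : Fin m, x a * ∑ b : Fin m, f ↑a ↑b * x b
      = ∑ b ∈ Finset.range m, f ↑a b * xe ↑a * xe b := by
    intro a
    rw [Finset.mul_sum, ← Fin.sum_univ_eq_sum_range (fun b => f ↑a b * xe ↑a * xe b)]
    exact Finset.sum_congr rfl fun b _ => by rw [hx a, hx b]; ring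
  rw [Finset.sum_congr rfl (fun a _ => h1 a),
    ← Fin.sum_univ_eq_sum_range (fun a => ∑ b ∈ Finset.range m, f a b * xe a * xe b)]

lemma trace_mul_of (ℓ : ℕ) (f g : ℕ → ℕ → ℝ) (hg : ∀ a b, g a b = g b a) :
    ((Matrix.of fun a b : Fin ℓ => f a b) * (Matrix.of fun a b : Fin ℓ => g a b)).trace
      = ∑ a ∈ Finset.range ℓ, ∑ b ∈ Finset.range ℓ, f a b * g a b := by
  simp only [Matrix.trace, Matrix.diag, Matrix.mul_apply, of_apply]
  rw [← Fin.sum_univ_eq_sum_range (fun a => ∑ b ∈ Finset.range ℓ, f a b * g a b)]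
  refine Finset.sum_congr rfl fun a _ => ?_
  rw [← Fin.sum_univ_eq_sum_range (fun b => f ↑a b * g ↑a b)]
  exact Finset.sum_congr rfl fun b _ => by rw [hg]

lemma pad_psd {d : ℕ} {M : Matrix (Fin d) (Fin d) ℝ} (hM : M.PosSemidef) :
    InfinitePSD (fun p q => if h : p < d ∧ q < d then M ⟨p, h.1⟩ ⟨q, h.2⟩ else 0) := by
  set Y : ℕ → ℕ → ℝ := fun p q => if h : p < d ∧ q < d then M ⟨p, h.1⟩ ⟨q, h.2⟩ else 0 with hY
  have hMsymm : ∀ a b : Fin d, M a b = M b a := by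
    intro a b
    have := congrFun (congrFun hM.1 a) b
    simpa [Matrix.conjTranspose_apply] using this.symm
  have hsymm : ∀ p q, Y p q = Y q p := by
    intro p q
    by_cases h : p < d ∧ q < d
    · simp only [hY]; rw [dif_pos h, dif_pos ⟨h.2, h.1⟩]; exact hMsymm _ _
    · simp only [hY]; rw [dif_neg h, dif_neg (fun h' => h ⟨h'.2, h'.1⟩)]
  have hzero : ∀ p q, d ≤ p ∨ d ≤ q → Y p q = 0 := by
    intro p q h
    simp only [hY]; exact dif_neg (fun h' => by rcases h with h | h <;> omega)
  refine ⟨hsymm, ?_, ?_⟩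
  · apply summable_of_ne_finset_zero (s := Finset.range d ×ˢ Finset.range d)
    intro p hp
    simp only [Finset.mem_product, Finset.mem_range, not_and_or, not_lt] at hp
    rw [hzero p.1 p.2 hp]; simp
  · intro m
    refine Matrix.PosSemidef.of_dotProduct_mulVec_nonneg ?_ ?_
    · ext a b
      simp only [Matrix.conjTranspose_apply, of_apply, star_trivial]
      exact hsymm b a
    · intro x
      rw [quad_eq m Y x]
      set xe : ℕ → ℝ := fun k => if h : k < m then x ⟨k, h⟩ else 0 with hxe
      set y : Fin d → ℝ := fun k => xe ↑k with hy
      have key : ∑ a ∈ Finset.range m, ∑ b ∈ Finset.range m, Y a b * xe a * xe b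
          = ∑ a ∈ Finset.range d, ∑ b ∈ Finset.range d,
              Y a b * (if h : a < d then y ⟨a, h⟩ else 0) * (if h : b < d then y ⟨b, h⟩ else 0) := by
        rw [sum2_ext (f := fun a b => Y a b * xe a * xe b) (le_max_left m d)
            (fun a b h => by
              rcases h with h | h
              · have : xe a = 0 := dif_neg (by omega)
                rw [this]; ring
              · have : xe b = 0 := dif_neg (by omega)
                rw [this]; ring),
          sum2_ext (f := fun a b =>
              Y a b * (if h : a < d then y ⟨a, h⟩ else 0) * (if h : b < d then y ⟨b, h⟩ else 0))
            (le_max_right m d)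
            (fun a b h => by
              rcases h with h | h
              · have : (if h' : a < d then y ⟨a, h'⟩ else 0) = 0 := dif_neg (by omega)
                rw [this]; ring
              · have : (if h' : b < d then y ⟨b, h'⟩ else 0) = 0 := dif_neg (by omega)
                rw [this]; ring)]
        refine Finset.sum_congr rfl fun a _ => Finset.sum_congr rfl fun b _ => ?_
        by_cases ha : a < d
        · by_cases hb : b < d
          · rw [dif_pos ha, dif_pos hb]
          · rw [hzero a b (Or.inr (by omega))]; ring
        · rw [hzero a b (Or.inl (by omega))]; ring
      rw [key, ← quad_eq d Y y]
      have hMY : (Matrix.of fun a b : Fin d => Y ↑a ↑b) = M := by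
        ext a b
        simp only [of_apply, hY]
        rw [dif_pos ⟨a.isLt, b.isLt⟩]
      rw [hMY]
      exact hM.dotProduct_mulVec_nonneg y

end CSProofAux

open CSProofAux Filter in
/-- `CS₊ⁿ ⊆ CS_{∞+}ⁿ ⊆ cl(CS₊ⁿ)`, and hence `cl(CS_{∞+}ⁿ) = cl(CS₊ⁿ)`. -/
theorem csplus_subset_csinf_subset_closure (n : ℕ) :
    {A : Matrix (Fin n) (Fin n) ℝ | CompletelyPSD A} ⊆ {A | CSinfPlus A} ∧
    {A : Matrix (Fin n) (Fin n) ℝ | CSinfPlus A} ⊆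
      closure {A : Matrix (Fin n) (Fin n) ℝ | CompletelyPSD A} ∧
    closure {A : Matrix (Fin n) (Fin n) ℝ | CSinfPlus A} =
      closure {A : Matrix (Fin n) (Fin n) ℝ | CompletelyPSD A} := by
  have h1 : {A : Matrix (Fin n) (Fin n) ℝ | CompletelyPSD A} ⊆ {A | CSinfPlus A} := by
    intro A hA
    obtain ⟨d, X, hd, hpsd, htr⟩ := hA
    set Y : Fin n → ℕ → ℕ → ℝ :=
      fun k p q => if h : p < d ∧ q < d then X k ⟨p, h.1⟩ ⟨q, h.2⟩ else 0 with hYdef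
    refine ⟨Y, fun i => pad_psd (hpsd i), fun i j => ?_⟩
    have hXY : ∀ k, X k = Matrix.of fun a b : Fin d => Y k ↑a ↑b := by
      intro k; ext a b
      simp only [of_apply, hYdef]
      rw [dif_pos ⟨a.isLt, b.isLt⟩]
    rw [htr i j, hXY i, hXY j, trace_mul_of d (Y i) (Y j) (pad_psd (hpsd j)).1,
      tsum_eq_sum (s := Finset.range d ×ˢ Finset.range d)
        (f := fun p : ℕ × ℕ => Y i p.1 p.2 * Y j p.1 p.2) ?_, Finset.sum_product]
    intro p hp
    simp only [Finset.mem_product, Finset.mem_range, not_and_or, not_lt] at hp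
    have : Y i p.1 p.2 = 0 := by
      simp only [hYdef]
      exact dif_neg (fun h' => by rcases hp with h | h <;> omega)
    rw [this, zero_mul]
  have h2 : {A : Matrix (Fin n) (Fin n) ℝ | CSinfPlus A} ⊆
      closure {A : Matrix (Fin n) (Fin n) ℝ | CompletelyPSD A} := by
    intro A hA
    obtain ⟨X, hX, hrep⟩ := hA
    have hsum : ∀ i j, Summable (fun p : ℕ × ℕ => X i p.1 p.2 * X j p.1 p.2) := by
      intro i j
      have hb : Summable (fun p : ℕ × ℕ => ((X i p.1 p.2) ^ 2 + (X j p.1 p.2) ^ 2) / 2) :=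
        ((hX i).2.1.add (hX j).2.1).div_const 2
      refine Summable.of_abs (Summable.of_nonneg_of_le (fun p => abs_nonneg _) (fun p => ?_) hb)
      rw [abs_mul]
      nlinarith [sq_nonneg (|X i p.1 p.2| - |X j p.1 p.2|), sq_abs (X i p.1 p.2),
        sq_abs (X j p.1 p.2), abs_nonneg (X i p.1 p.2), abs_nonneg (X j p.1 p.2)]
    set B : ℕ → Matrix (Fin n) (Fin n) ℝ := fun ℓ => Matrix.of fun i j =>
      ∑ p ∈ Finset.range (ℓ + 1) ×ˢ Finset.range (ℓ + 1), X i p.1 p.2 * X j p.1 p.2 with hB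
    have hmem : ∀ ℓ, CompletelyPSD (B ℓ) := by
      intro ℓ
      refine ⟨ℓ + 1, fun i => Matrix.of fun a b : Fin (ℓ + 1) => X i ↑a ↑b,
        Nat.succ_le_succ (Nat.zero_le _), fun i => (hX i).2.2 (ℓ + 1), fun i j => ?_⟩
      rw [trace_mul_of (ℓ + 1) (X i) (X j) (hX j).1]
      show (∑ p ∈ Finset.range (ℓ + 1) ×ˢ Finset.range (ℓ + 1), X i p.1 p.2 * X j p.1 p.2) = _
      rw [Finset.sum_product]
    have htend : Tendsto B atTop (nhds A) := by
      refine tendsto_pi_nhds.mpr ?_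
      intro i
      rw [tendsto_pi_nhds]
      intro j
      have hfin : Tendsto (fun ℓ : ℕ => Finset.range (ℓ + 1) ×ˢ Finset.range (ℓ + 1))
          atTop atTop := by
        apply tendsto_atTop_finset_of_monotone
        · intro k l hkl
          exact Finset.product_subset_product (Finset.range_subset_range.2 (by omega))
            (Finset.range_subset_range.2 (by omega))
        · intro p
          exact ⟨max p.1 p.2, by simp only [Finset.mem_product, Finset.mem_range]; omega⟩
      have := ((hsum i j).hasSum.comp hfin : Tendsto _ atTop _)
      rw [hrep i j]
      exact this
    exact mem_closure_of_tendsto htend (Eventually.of_forall hmem)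
  exact ⟨h1, h2, subset_antisymm (closure_minimal h2 isClosed_closure) (closure_mono h1)⟩
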